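/- Let a, b, x ∈ ℝ with x ≠ 0 satisfy x⁶ - b*x³ - a³/27 = 0, and set y = -x - a/(3*x) and ω = (1 + i*√3)/2. Then z = x + ω*y satisfies z³ + a*z + b = 0 in ℂ. -/

import Mathlib

theorem cubic_solution_from_resolvent (a b x : ℝ) (hx : x ≠ 0)
    (h : x ^ 6 - b * x ^ 3 - a ^ 3 / 27 = 0) :
    ((x : ℂ) + (1 + Complex.I * Real.sqrt 3) / 2 * ((-x - a / (3 * x) : ℝ) : ℂ)) ^ 3
      + a * ((x : ℂ) + (1 + Complex.I * Real.sqrt 3) / 2 * ((-x - a / (3 * x) : ℝ) : ℂ)) + b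
      = 0 := by
  have hx' : (x:ℂ) ≠ 0 := by exact_mod_cast hx
  have h' : (x:ℂ)^6 - b*(x:ℂ)^3 - (a:ℂ)^3/27 = 0 := by exact_mod_cast h
  have hI : Complex.I^2 = -1 := Complex.I_sq
  have hs : ((Real.sqrt 3 : ℝ):ℂ)^2 = 3 := by
    norm_cast
    rw [Real.sq_sqrt]; norm_num
  set s : ℂ := ((Real.sqrt 3 : ℝ):ℂ) with hsdef
  set I : ℂ := Complex.I with hIdef
  push_cast
  field_simp
  linear_combination (-216:ℂ) * h'
    + (81*x^6*s^2 + 27*x^4*a*s^2 - 9*x^2*a^2*s^2 - 3*a^3*s^2 - 27*x^6*I*s^3 - 27*x^4*a*I*s^3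
       - 9*x^2*a^2*I*s^3 - a^3*I*s^3) * hI
    + (-81*x^6 - 27*x^4*a + 9*x^2*a^2 + 3*a^3 + 27*x^6*I*s + 27*x^4*a*I*s + 9*x^2*a^2*I*s
       + a^3*I*s) * hs
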